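/- arXiv:math/0303055 — 3 statements merged into one kernel-verified Lean document; each statement's English description precedes it below -/
import Mathlib

section
/- Let g : ℂ → ℂ be holomorphic and nowhere vanishing on the punctured unit disk D* = {z ∈ ℂ : 0 < |z| < 1}, and suppose there is a function h : ℂ → ℂ holomorphic on the unit disk D = {z ∈ ℂ : |z| < 1} such that h(z) = z · g'(z)/g(z) for all z ∈ D*. Then g is meromorphic at 0 (i.e., MeromorphicAt g 0: some power zⁿ·g(z) extends analytically across 0). -/
open Complex Filter Topology


lemma ray_formula (g h : ℂ → ℂ)
    (hg : ∀ z : ℂ, 0 < ‖z‖ → ‖z‖ < 1 → DifferentiableAt ℂ g z)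
    (hg0 : ∀ z : ℂ, 0 < ‖z‖ → ‖z‖ < 1 → g z ≠ 0)
    (hh : ∀ z : ℂ, ‖z‖ < 1 → DifferentiableAt ℂ h z)
    (heq : ∀ z : ℂ, 0 < ‖z‖ → ‖z‖ < 1 → h z = z * deriv g z / g z)
    (w : ℂ) (hw : ‖w‖ = 1/2) {t : ℝ} (ht0 : 0 < t) (ht1 : t ≤ 1) :
    g ((t:ℂ) * w) = g w * Complex.exp (∫ u in (1:ℝ)..t, h ((u:ℂ)*w) / (u:ℂ)) := by
  set φ : ℝ → ℂ := fun u => h ((u:ℂ)*w) / (u:ℂ) with hφ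
  have hnorm : ∀ s : ℝ, 0 < s → ‖(s:ℂ)*w‖ = s/2 := by
    intro s hs
    rw [norm_mul, hw, Complex.norm_real, Real.norm_of_nonneg hs.le]; ring
  have hφcont : ContinuousOn φ (Set.Ioo 0 2) := by
    intro u hu
    have h1 : ‖(u:ℂ)*w‖ < 1 := by rw [hnorm u hu.1]; linarith [hu.2]
    have hcm : Continuous (fun x : ℝ => (x:ℂ)*w) := by continuity
    apply ContinuousWithinAt.div
    · have : ContinuousAt (fun x : ℝ => h ((x:ℂ)*w)) u :=
        ContinuousAt.comp (g := h) (f := fun x : ℝ => (x:ℂ)*w) (hh _ h1).continuousAt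
          hcm.continuousAt
      exact this.continuousWithinAt
    · exact Complex.continuous_ofReal.continuousWithinAt
    · exact_mod_cast hu.1.ne'
  set F : ℝ → ℂ := fun s => g ((s:ℂ)*w) * Complex.exp (-∫ u in (1:ℝ)..s, φ u) with hF
  have key : ∀ s ∈ Set.Ioo (0:ℝ) 2, HasDerivAt F 0 s := by
    intro s hs
    have hsn := hnorm s hs.1
    have hs1 : ‖(s:ℂ)*w‖ < 1 := by rw [hsn]; linarith [hs.2]
    have hs0 : 0 < ‖(s:ℂ)*w‖ := by rw [hsn]; linarith [hs.1]
    have hgne := hg0 _ hs0 hs1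
    set c := deriv g ((s:ℂ)*w) with hc
    -- derivative of s ↦ g (s*w)
    have hm : HasDerivAt (fun s : ℝ => (s:ℂ)*w) w s := by
      simpa using (Complex.ofRealCLM.hasDerivAt (x := s)).mul_const w
    have hgd : HasDerivAt (fun s : ℝ => g ((s:ℂ)*w)) (w * c) s := by
      have := ((hg _ hs0 hs1).hasDerivAt.hasFDerivAt.restrictScalars ℝ).comp_hasDerivAt s hm
      exact this
    -- derivative of the integral
    have hint : HasDerivAt (fun s : ℝ => ∫ u in (1:ℝ)..s, φ u) (φ s) s := by
      apply intervalIntegral.integral_hasDerivAt_right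
      · apply ContinuousOn.intervalIntegrable
        apply hφcont.mono
        exact Set.ordConnected_Ioo.uIcc_subset (by constructor <;> linarith [hs.1, hs.2])
          (by exact ⟨hs.1, hs.2⟩)
      · exact hφcont.stronglyMeasurableAtFilter isOpen_Ioo s hs
      · exact (hφcont.continuousAt (isOpen_Ioo.mem_nhds hs))
    have hexp : HasDerivAt (fun s : ℝ => Complex.exp (-∫ u in (1:ℝ)..s, φ u))
        (Complex.exp (-∫ u in (1:ℝ)..s, φ u) * (-φ s)) s := (hint.neg).cexp
    have hFd := hgd.mul hexp
    have hval : g ((s:ℂ)*w) * φ s = w * c := by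
      have hsne : (s:ℂ) ≠ 0 := by exact_mod_cast hs.1.ne'
      rw [hφ]
      simp only
      rw [heq _ hs0 hs1, ← hc]
      field_simp
    rw [show (0:ℂ) = w * c * Complex.exp (-∫ u in (1:ℝ)..s, φ u) +
        g ((s:ℂ)*w) * (Complex.exp (-∫ u in (1:ℝ)..s, φ u) * (-φ s)) by
      have : g ((s:ℂ)*w) * (Complex.exp (-∫ u in (1:ℝ)..s, φ u) * (-φ s))
          = -(w * c * Complex.exp (-∫ u in (1:ℝ)..s, φ u)) := by
        rw [show g ((s:ℂ)*w) * (Complex.exp (-∫ u in (1:ℝ)..s, φ u) * (-φ s))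
            = (g ((s:ℂ)*w) * φ s) * (-Complex.exp (-∫ u in (1:ℝ)..s, φ u)) by ring, hval]
        ring
      rw [this]; ring]
    exact hFd
  -- F is constant on [t,1]
  have hconst : F 1 = F t := by
    have := constant_of_has_deriv_right_zero (f := F) (a := t) (b := 1)
      (fun x hx => (key x ⟨lt_of_lt_of_le ht0 hx.1, by linarith [hx.2]⟩).continuousAt.continuousWithinAt)
      (fun x hx => (key x ⟨lt_of_lt_of_le ht0 hx.1, by linarith [hx.2.le]⟩).hasDerivWithinAt)
    exact this 1 ⟨ht1, le_refl 1⟩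
  have hF1 : F 1 = g w := by
    simp [hF, intervalIntegral.integral_same]
  have : g ((t:ℂ)*w) * Complex.exp (-∫ u in (1:ℝ)..t, φ u) = g w := by
    rw [← hF1]; exact hconst.symm ▸ rfl
  calc g ((t:ℂ)*w) = g ((t:ℂ)*w) * Complex.exp (-∫ u in (1:ℝ)..t, φ u)
        * Complex.exp (∫ u in (1:ℝ)..t, φ u) := by
        rw [mul_assoc, ← Complex.exp_add]; simp
    _ = g w * Complex.exp (∫ u in (1:ℝ)..t, φ u) := by rw [this]

lemma ray_bound (g h : ℂ → ℂ)
    (hg : ∀ z : ℂ, 0 < ‖z‖ → ‖z‖ < 1 → DifferentiableAt ℂ g z)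
    (hg0 : ∀ z : ℂ, 0 < ‖z‖ → ‖z‖ < 1 → g z ≠ 0)
    (hh : ∀ z : ℂ, ‖z‖ < 1 → DifferentiableAt ℂ h z)
    (heq : ∀ z : ℂ, 0 < ‖z‖ → ‖z‖ < 1 → h z = z * deriv g z / g z)
    (M C : ℝ) (hM : ∀ z : ℂ, ‖z‖ ≤ 1/2 → ‖h z‖ ≤ M)
    (hC : ∀ w : ℂ, ‖w‖ = 1/2 → ‖g w‖ ≤ C)
    (z : ℂ) (hz0 : 0 < ‖z‖) (hz1 : ‖z‖ ≤ 1/2) :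
    ‖g z‖ ≤ C * (2*‖z‖)⁻¹ ^ M := by
  set t : ℝ := 2*‖z‖ with htdef
  have ht0 : 0 < t := by positivity
  have ht1 : t ≤ 1 := by rw [htdef]; linarith
  set w : ℂ := ((t:ℝ):ℂ)⁻¹ * z with hwdef
  have htne : ((t:ℝ):ℂ) ≠ 0 := by exact_mod_cast ht0.ne'
  have hw : ‖w‖ = 1/2 := by
    rw [hwdef, norm_mul, norm_inv, Complex.norm_real, Real.norm_of_nonneg ht0.le, htdef,
      mul_inv, mul_assoc, inv_mul_cancel₀ hz0.ne', mul_one]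
    norm_num
  have hz : (t:ℂ) * w = z := by rw [hwdef]; field_simp
  have hform := ray_formula g h hg hg0 hh heq w hw ht0 ht1
  rw [hz] at hform
  set I : ℂ := ∫ u in (1:ℝ)..t, h ((u:ℂ)*w) / (u:ℂ) with hI
  have hφn : ∀ u ∈ Set.Icc t 1, ‖h ((u:ℂ)*w) / (u:ℂ)‖ ≤ M * u⁻¹ := by
    intro u hu
    have hu0 : 0 < u := lt_of_lt_of_le ht0 hu.1
    have : ‖(u:ℂ)*w‖ ≤ 1/2 := by
      rw [norm_mul, hw, Complex.norm_real, Real.norm_of_nonneg hu0.le]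
      nlinarith [hu.2]
    rw [norm_div, Complex.norm_real, Real.norm_of_nonneg hu0.le, div_eq_mul_inv]
    exact mul_le_mul_of_nonneg_right (hM _ this) (by positivity)
  have hφcont : ContinuousOn (fun u : ℝ => h ((u:ℂ)*w) / (u:ℂ)) (Set.Icc t 1) := by
    intro u hu
    have hu0 : 0 < u := lt_of_lt_of_le ht0 hu.1
    have h1 : ‖(u:ℂ)*w‖ < 1 := by
      rw [norm_mul, hw, Complex.norm_real, Real.norm_of_nonneg hu0.le]
      nlinarith [hu.2]
    have hcm : Continuous (fun x : ℝ => (x:ℂ)*w) := by continuity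
    apply ContinuousWithinAt.div
    · have : ContinuousAt (fun x : ℝ => h ((x:ℂ)*w)) u :=
        ContinuousAt.comp (g := h) (f := fun x : ℝ => (x:ℂ)*w) (hh _ h1).continuousAt
          hcm.continuousAt
      exact this.continuousWithinAt
    · exact Complex.continuous_ofReal.continuousWithinAt
    · exact_mod_cast hu0.ne'
  have hre : I.re ≤ M * Real.log t⁻¹ := by
    have h1 : I.re ≤ ‖I‖ := Complex.re_le_norm I
    have h2 : ‖I‖ = ‖∫ u in t..(1:ℝ), h ((u:ℂ)*w) / (u:ℂ)‖ := by
      rw [hI, intervalIntegral.integral_symm]; simp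
    have h3 : ‖∫ u in t..(1:ℝ), h ((u:ℂ)*w) / (u:ℂ)‖
        ≤ ∫ u in t..(1:ℝ), ‖h ((u:ℂ)*w) / (u:ℂ)‖ :=
      intervalIntegral.norm_integral_le_integral_norm ht1
    have h4 : (∫ u in t..(1:ℝ), ‖h ((u:ℂ)*w) / (u:ℂ)‖) ≤ ∫ u in t..(1:ℝ), M * u⁻¹ := by
      apply intervalIntegral.integral_mono_on ht1
      · exact (hφcont.norm).intervalIntegrable_of_Icc ht1
      · apply ContinuousOn.intervalIntegrable_of_Icc ht1
        apply ContinuousOn.mul continuousOn_const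
        exact ContinuousOn.inv₀ continuousOn_id (fun x hx => (lt_of_lt_of_le ht0 hx.1).ne')
      · exact hφn
    have h5 : (∫ u in t..(1:ℝ), M * u⁻¹) = M * Real.log t⁻¹ := by
      rw [intervalIntegral.integral_const_mul, integral_inv_of_pos ht0 one_pos, one_div]
    linarith
  have hne : ‖Complex.exp I‖ = Real.exp I.re := by rw [Complex.norm_exp]
  have hCnn : 0 ≤ C := le_trans (norm_nonneg _) (hC w hw)
  calc ‖g z‖ = ‖g w‖ * Real.exp I.re := by rw [hform, norm_mul, hne]
    _ ≤ C * Real.exp (M * Real.log t⁻¹) :=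
        mul_le_mul (hC w hw) (Real.exp_le_exp.mpr hre) (Real.exp_pos _).le hCnn
    _ = C * t⁻¹ ^ M := by
        rw [Real.rpow_def_of_pos (inv_pos.mpr ht0), mul_comm M]
    _ = C * (2*‖z‖)⁻¹ ^ M := by rw [htdef]
/-- Lemma 1: if `g` is holomorphic and nowhere vanishing on the punctured unit disk
and `z * g'(z)/g(z)` extends to a function `h` holomorphic on the unit disk,
then `g` is meromorphic at `0`. -/
theorem meromorphicAt_of_z_logDeriv_extends_holomorphic
    (g h : ℂ → ℂ)
    (hg : ∀ z : ℂ, 0 < ‖z‖ → ‖z‖ < 1 → DifferentiableAt ℂ g z)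
    (hg0 : ∀ z : ℂ, 0 < ‖z‖ → ‖z‖ < 1 → g z ≠ 0)
    (hh : ∀ z : ℂ, ‖z‖ < 1 → DifferentiableAt ℂ h z)
    (heq : ∀ z : ℂ, 0 < ‖z‖ → ‖z‖ < 1 → h z = z * deriv g z / g z) :
    MeromorphicAt g 0 := by
  -- bound for h on the closed ball of radius 1/2
  obtain ⟨M, hM⟩ : ∃ M : ℝ, ∀ z : ℂ, ‖z‖ ≤ 1/2 → ‖h z‖ ≤ M := by
    obtain ⟨M, hM⟩ := (isCompact_closedBall (0:ℂ) (1/2)).exists_bound_of_continuousOn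
      (fun z hz => (hh z (by
        have := Metric.mem_closedBall.mp hz
        rw [Complex.dist_eq, sub_zero] at this
        calc ‖z‖ ≤ 1/2 := this
          _ < 1 := by norm_num)).continuousAt.continuousWithinAt)
    exact ⟨M, fun z hz => hM z (by simpa [Metric.mem_closedBall, Complex.dist_eq] using hz)⟩
  -- bound for g on the sphere of radius 1/2
  obtain ⟨C, hC⟩ : ∃ C : ℝ, ∀ w : ℂ, ‖w‖ = 1/2 → ‖g w‖ ≤ C := by
    obtain ⟨C, hC⟩ := (isCompact_sphere (0:ℂ) (1/2)).exists_bound_of_continuousOn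
      (fun z hz => by
        have hzn : ‖z‖ = 1/2 := by simpa [Metric.mem_sphere, Complex.dist_eq] using hz
        exact (hg z (by rw [hzn]; norm_num) (by rw [hzn]; norm_num)).continuousAt.continuousWithinAt)
    exact ⟨C, fun w hw => hC w (by simpa [Metric.mem_sphere, Complex.dist_eq] using hw)⟩
  have hCnn : 0 ≤ C := le_trans (norm_nonneg _)
    (hC ((1:ℝ)/2 : ℂ) (by rw [show ((1:ℝ)/2 : ℂ) = (((1:ℝ)/2 : ℝ) : ℂ) by norm_num,
      Complex.norm_real, Real.norm_of_nonneg (by norm_num)]))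
  set n : ℕ := ⌈M⌉₊ with hn
  -- z^n * g z is bounded by C on the punctured ball of radius 1/2
  have hbd : ∀ z : ℂ, 0 < ‖z‖ → ‖z‖ < 1/2 → ‖z^n * g z‖ ≤ C := by
    intro z hz0 hz1
    have hgb := ray_bound g h hg hg0 hh heq M C hM hC z hz0 hz1.le
    set t : ℝ := 2*‖z‖ with htdef
    have ht0 : 0 < t := by positivity
    have ht1 : t ≤ 1 := by rw [htdef]; linarith
    have h1 : ‖z^n * g z‖ ≤ ‖z‖^n * (C * t⁻¹ ^ M) := by
      rw [norm_mul, norm_pow]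
      exact mul_le_mul_of_nonneg_left hgb (by positivity)
    have h2 : ‖z‖^n ≤ t^n := pow_le_pow_left₀ (norm_nonneg z) (by rw [htdef]; linarith) n
    have h3 : t^n * t⁻¹ ^ M ≤ 1 := by
      rw [← Real.rpow_natCast t n, Real.inv_rpow ht0.le, ← Real.rpow_neg ht0.le,
        ← Real.rpow_add ht0]
      exact Real.rpow_le_one ht0.le ht1 (by
        have := Nat.le_ceil M
        rw [hn]; push_cast; linarith)
    calc ‖z^n * g z‖ ≤ ‖z‖^n * (C * t⁻¹ ^ M) := h1
      _ ≤ t^n * (C * t⁻¹ ^ M) := by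
          apply mul_le_mul_of_nonneg_right h2 (by positivity)
      _ = C * (t^n * t⁻¹ ^ M) := by ring
      _ ≤ C * 1 := mul_le_mul_of_nonneg_left h3 hCnn
      _ = C := mul_one C
  -- removable singularity
  set s : Set ℂ := Metric.ball (0:ℂ) (1/2) with hs
  have hsmem : s ∈ 𝓝 (0:ℂ) := Metric.ball_mem_nhds 0 (by norm_num)
  set f₀ : ℂ → ℂ := fun z => z^n * g z with hf₀
  have hmem : ∀ z ∈ s \ {0}, 0 < ‖z‖ ∧ ‖z‖ < 1/2 := by
    intro z hz
    refine ⟨norm_pos_iff.mpr (by simpa using hz.2), ?_⟩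
    have := Metric.mem_ball.mp hz.1
    rwa [Complex.dist_eq, sub_zero] at this
  have hd : DifferentiableOn ℂ f₀ (s \ {0}) := by
    intro z hz
    obtain ⟨hz0, hz1⟩ := hmem z hz
    exact ((differentiableAt_pow n).mul
      (hg z hz0 (by linarith))).differentiableWithinAt
  have hb : BddAbove (norm ∘ f₀ '' (s \ {0})) := by
    refine ⟨C, ?_⟩
    rintro x ⟨z, hz, rfl⟩
    obtain ⟨hz0, hz1⟩ := hmem z hz
    exact hbd z hz0 hz1
  have H := Complex.differentiableOn_update_limUnder_of_bddAbove hsmem hd hb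
  set F : ℂ → ℂ := Function.update f₀ 0 (limUnder (𝓝[≠] (0:ℂ)) f₀) with hF
  have hFa : AnalyticAt ℂ F 0 := H.analyticAt hsmem
  refine ⟨n+1, ?_⟩
  have hfun : (fun z : ℂ => (z - 0)^(n+1) • g z) = fun z => z * F z := by
    funext z
    by_cases hz : z = 0
    · simp [hz]
    · rw [hF, Function.update_of_ne hz, hf₀]
      simp only [sub_zero, smul_eq_mul]
      ring
  rw [hfun]
  exact (analyticAt_id.mul hFa)
end

section
/- Let g : ℂ → ℂ be holomorphic and nowhere vanishing on the punctured unit disk D* = {z ∈ ℂ : 0 < |z| < 1}, and suppose there is a function h : ℂ → ℂ holomorphic on the unit disk D = {z ∈ ℂ : |z| < 1} such that h(z) = z · g'(z)/g(z) for all z ∈ D*. Then g has moderate growth at 0: there exist a constant C > 0 and a natural number N such that ‖g(z)‖ ≤ C · ‖z‖^(−N) for all z with 0 < ‖z‖ ≤ 1/2. -/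
open Complex

/-- Moderate growth estimate: if `g` is holomorphic and nowhere vanishing on the
punctured unit disk and `z * g'(z)/g(z)` extends to a function `h` holomorphic on the
unit disk, then `g` has moderate growth at `0`. -/
theorem moderate_growth_of_z_logDeriv_extends_holomorphic
    (g h : ℂ → ℂ)
    (hg : ∀ z : ℂ, 0 < ‖z‖ → ‖z‖ < 1 → DifferentiableAt ℂ g z)
    (hg0 : ∀ z : ℂ, 0 < ‖z‖ → ‖z‖ < 1 → g z ≠ 0)
    (hh : ∀ z : ℂ, ‖z‖ < 1 → DifferentiableAt ℂ h z)
    (heq : ∀ z : ℂ, 0 < ‖z‖ → ‖z‖ < 1 → h z = z * deriv g z / g z) :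
    ∃ C : ℝ, 0 < C ∧ ∃ N : ℕ,
      ∀ z : ℂ, 0 < ‖z‖ → ‖z‖ ≤ 1 / 2 → ‖g z‖ ≤ C * ‖z‖ ^ (-(N : ℤ)) := by
  -- bound `h` on the closed ball of radius 1/2
  obtain ⟨M, hM⟩ : ∃ M : ℝ, ∀ z ∈ Metric.closedBall (0:ℂ) (1/2), ‖h z‖ ≤ M := by
    apply (isCompact_closedBall (0:ℂ) (1/2)).exists_bound_of_continuousOn
    intro z hz
    have : ‖z‖ < 1 := by
      have := Metric.mem_closedBall.mp hz
      rw [dist_zero_right] at this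
      linarith
    exact (hh z this).continuousAt.continuousWithinAt
  set K : ℝ := max M 0 with hKdef
  have hK0 : 0 ≤ K := le_max_right _ _
  -- bound `g` on the sphere of radius 1/2
  obtain ⟨C₀, hC₀⟩ : ∃ C : ℝ, ∀ z ∈ Metric.sphere (0:ℂ) (1/2), ‖g z‖ ≤ C := by
    apply (isCompact_sphere (0:ℂ) (1/2)).exists_bound_of_continuousOn
    intro z hz
    rw [mem_sphere_iff_norm, sub_zero] at hz
    exact ((hg z (by rw [hz]; norm_num) (by rw [hz]; norm_num)).continuousAt).continuousWithinAt
  set C : ℝ := max C₀ 1 with hCdef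
  have hC1 : (1:ℝ) ≤ C := le_max_right _ _
  refine ⟨C, by linarith, ⌈K⌉₊, ?_⟩
  intro z hz hz2
  set r : ℝ := ‖z‖ with hr
  set c : ℂ := z / (2 * (r:ℂ)) with hc
  have hrne : (r:ℂ) ≠ 0 := by
    exact_mod_cast ne_of_gt hz
  have hcnorm : ‖c‖ = 1/2 := by
    rw [hc, norm_div, norm_mul]
    simp [Complex.norm_real, abs_of_pos hz, ← hr]
    field_simp
  set ζ : ℝ → ℂ := fun s => ((Real.exp (-s) : ℝ) : ℂ) * c with hζ
  have hζnorm : ∀ s, ‖ζ s‖ = Real.exp (-s) / 2 := by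
    intro s
    rw [hζ]
    simp [norm_mul, Complex.norm_real, abs_of_pos (Real.exp_pos _), hcnorm,
      Complex.norm_exp]
    ring
  set S : ℝ := -Real.log (2 * r) with hS
  have h2r : 0 < 2 * r := by linarith
  have h2r1 : 2 * r ≤ 1 := by linarith
  have hS0 : 0 ≤ S := by
    rw [hS, neg_nonneg]
    exact Real.log_nonpos (by linarith) h2r1
  have hζS : ζ S = z := by
    rw [hζ]
    simp only [hS, neg_neg, Real.exp_log h2r]
    rw [hc]
    push_cast
    field_simp
  have hζ0 : ζ 0 = c := by simp [hζ]
  -- facts about ζ s for s ∈ Icc 0 S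
  have hmem : ∀ s ∈ Set.Icc (0:ℝ) S, 0 < ‖ζ s‖ ∧ ‖ζ s‖ ≤ 1/2 := by
    intro s hs
    rw [hζnorm]
    constructor
    · positivity
    · have : Real.exp (-s) ≤ 1 := Real.exp_le_one_iff.mpr (by linarith [hs.1])
      linarith
  have hlt1 : ∀ s ∈ Set.Icc (0:ℝ) S, ‖ζ s‖ < 1 := fun s hs => by
    linarith [(hmem s hs).2]
  -- derivative of ζ
  have hζ' : ∀ s : ℝ, HasDerivAt ζ (-ζ s) s := by
    intro s
    have h1 : HasDerivAt (fun s : ℝ => Real.exp (-s)) (Real.exp (-s) * (-1)) s :=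
      (Real.hasDerivAt_exp (-s)).comp s ((hasDerivAt_id s).neg)
    have h2 := h1.ofReal_comp.mul_const c
    convert h2 using 1
    · rfl
    simp only [hζ]
    push_cast
    ring
  -- derivative of g ∘ ζ
  have hψ : ∀ s ∈ Set.Icc (0:ℝ) S, HasDerivAt (g ∘ ζ) (-(h (ζ s) * g (ζ s))) s := by
    intro s hs
    have hp := (hmem s hs).1
    have hl := hlt1 s hs
    have h1 := ((hg (ζ s) hp hl).hasDerivAt).comp s (hζ' s)
    convert h1 using 1
    · rfl
    have := heq (ζ s) hp hl
    have hgne := hg0 (ζ s) hp hl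
    field_simp at this ⊢
    rw [this]
  have hcont : ContinuousOn (g ∘ ζ) (Set.Icc 0 S) :=
    fun s hs => ((hψ s hs).continuousAt).continuousWithinAt
  have ha : ‖(g ∘ ζ) 0‖ ≤ C := by
    have : c ∈ Metric.sphere (0:ℂ) (1/2) := by
      rw [mem_sphere_iff_norm, sub_zero]; exact hcnorm
    calc ‖(g ∘ ζ) 0‖ = ‖g c‖ := by rw [Function.comp_apply, hζ0]
      _ ≤ C₀ := hC₀ c this
      _ ≤ C := le_max_left _ _
  have bound : ∀ s ∈ Set.Ico (0:ℝ) S, ‖-(h (ζ s) * g (ζ s))‖ ≤ K * ‖(g ∘ ζ) s‖ + 0 := by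
    intro s hs
    have hs' : s ∈ Set.Icc (0:ℝ) S := ⟨hs.1, le_of_lt hs.2⟩
    rw [norm_neg, norm_mul, add_zero]
    apply mul_le_mul_of_nonneg_right _ (norm_nonneg _)
    refine le_trans (hM (ζ s) ?_) (le_max_left _ _)
    rw [Metric.mem_closedBall, dist_zero_right]
    exact (hmem s hs').2
  have key := norm_le_gronwallBound_of_norm_deriv_right_le hcont
    (fun s hs => (hψ s ⟨hs.1, le_of_lt hs.2⟩).hasDerivWithinAt) ha bound S
    ⟨hS0, le_refl S⟩
  rw [gronwallBound_ε0, Function.comp_apply, hζS, sub_zero] at key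
  -- now estimate C * exp (K * S)
  have hexp : Real.exp (K * S) ≤ r ^ (-(⌈K⌉₊ : ℤ)) := by
    have h1 : Real.exp (K * S) = (2 * r) ^ (-K : ℝ) := by
      rw [hS, Real.rpow_def_of_pos h2r]
      ring_nf
    rw [h1]
    have h2 : (2*r) ^ (-K : ℝ) ≤ (2*r) ^ (-(⌈K⌉₊:ℝ)) := by
      apply Real.rpow_le_rpow_of_exponent_ge h2r h2r1
      simp only [neg_le_neg_iff]
      exact Nat.le_ceil K
    refine le_trans h2 ?_
    have e1 : (2*r) ^ (-(⌈K⌉₊:ℝ)) = ((2*r) ^ (⌈K⌉₊:ℕ))⁻¹ := by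
      rw [Real.rpow_neg h2r.le, Real.rpow_natCast]
    have e2 : r ^ (-(⌈K⌉₊:ℤ)) = ((r:ℝ) ^ (⌈K⌉₊:ℕ))⁻¹ := by
      rw [zpow_neg, zpow_natCast]
    rw [e1, e2]
    exact inv_anti₀ (pow_pos hz _) (pow_le_pow_left₀ hz.le (by linarith) _)
  calc ‖g z‖ ≤ C * Real.exp (K * S) := key
    _ ≤ C * r ^ (-(⌈K⌉₊ : ℤ)) := by
        apply mul_le_mul_of_nonneg_left hexp (by linarith)
end

section
/- Let g : ℂ → ℂ be holomorphic and nowhere vanishing on the punctured unit disk D* = {z ∈ ℂ : 0 < |z| < 1}, and suppose there is a function h : ℂ → ℂ holomorphic on the unit disk D = {z ∈ ℂ : |z| < 1} such that h(z) = z · g'(z)/g(z) for all z ∈ D*. Then there exist an integer m and a function u : ℂ → ℂ that is holomorphic and nowhere vanishing on D such that g(z) = z^m · u(z) for all z ∈ D*. -/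
open Complex Metric Set Filter
open scoped Topology

private lemma aux_exists_int (g h : ℂ → ℂ)
    (hg : ∀ z : ℂ, 0 < ‖z‖ → ‖z‖ < 1 → DifferentiableAt ℂ g z)
    (hg0 : ∀ z : ℂ, 0 < ‖z‖ → ‖z‖ < 1 → g z ≠ 0)
    (hh : ∀ z : ℂ, ‖z‖ < 1 → DifferentiableAt ℂ h z)
    (heq : ∀ z : ℂ, 0 < ‖z‖ → ‖z‖ < 1 → h z = z * deriv g z / g z) :
    ∃ m : ℤ, (m : ℂ) = h 0 := by
  have hnorm : ∀ θ : ℝ, ‖circleMap 0 (1/2) θ‖ = 1/2 := fun θ => by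
    rw [norm_circleMap_zero]; norm_num
  have hmem : ∀ θ : ℝ, 0 < ‖circleMap 0 (1/2) θ‖ ∧ ‖circleMap 0 (1/2) θ‖ < 1 := fun θ => by
    rw [hnorm θ]; norm_num
  have cauchy : (∮ z in C(0, 1/2), (z - 0)⁻¹ • h z) = (2 * Real.pi * I : ℂ) • h 0 := by
    apply Complex.circleIntegral_sub_inv_smul_of_differentiable_on_off_countable
      (s := ∅) countable_empty (mem_ball_self (by norm_num))
    · intro z hz
      have : ‖z‖ < 1 := lt_of_le_of_lt (mem_closedBall_zero_iff.mp hz) (by norm_num)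
      exact (hh z this).continuousAt.continuousWithinAt
    · intro z hz
      have : ‖z‖ < 1 := lt_trans (mem_ball_zero_iff.mp hz.1) (by norm_num)
      exact hh z this
  have key : (∫ θ in (0:ℝ)..(2*Real.pi), I * h (circleMap 0 (1/2) θ))
      = 2 * Real.pi * I * h 0 := by
    rw [smul_eq_mul] at cauchy
    rw [← cauchy]
    simp only [circleIntegral, deriv_circleMap, smul_eq_mul]
    apply intervalIntegral.integral_congr
    intro θ _
    have hne : circleMap 0 (1/2) θ ≠ 0 := circleMap_ne_center (by norm_num)
    field_simp
    ring
  set c : ℝ → ℂ := circleMap 0 (1/2) with hc_def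
  have hcont : Continuous fun θ : ℝ => I * h (c θ) := by
    apply continuous_const.mul
    apply continuous_iff_continuousAt.mpr
    intro θ
    exact ((hh (c θ) (hmem θ).2).continuousAt).comp (continuous_circleMap 0 (1/2)).continuousAt
  set A : ℝ → ℂ := fun t => ∫ θ in (0:ℝ)..t, I * h (c θ) with hA_def
  have hA : ∀ t : ℝ, HasDerivAt A (I * h (c t)) t := fun t =>
    (hcont.integral_hasStrictDerivAt 0 t).hasDerivAt
  have hw : ∀ t : ℝ, HasDerivAt (fun s => g (c s)) (deriv g (c t) * (c t * I)) t := fun t =>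
    ((hg (c t) (hmem t).1 (hmem t).2).hasDerivAt).comp t (hasDerivAt_circleMap 0 (1/2) t)
  have hP : ∀ t : ℝ, HasDerivAt (fun s => g (c s) * Complex.exp (-A s)) 0 t := by
    intro t
    have h1 := (hw t).mul ((hA t).neg.cexp)
    refine h1.congr_deriv ?_; symm
    have hgne := hg0 (c t) (hmem t).1 (hmem t).2
    have hgh : g (c t) * h (c t) = c t * deriv g (c t) := by
      rw [heq (c t) (hmem t).1 (hmem t).2]; field_simp
    linear_combination Complex.exp (-A t) * I * hgh
  have hPconst := is_const_of_deriv_eq_zero (fun t => (hP t).differentiableAt)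
      (fun t => (hP t).deriv) (2*Real.pi) 0
  have hc2π : c (2*Real.pi) = c 0 := by
    have := periodic_circleMap 0 (1/2) 0
    rwa [zero_add] at this
  have hA0 : A 0 = 0 := intervalIntegral.integral_same
  have hgc0 : g (c 0) ≠ 0 := hg0 _ (hmem 0).1 (hmem 0).2
  rw [hc2π, hA0] at hPconst
  have hexp1 : Complex.exp (-A (2*Real.pi)) = 1 := by
    have := mul_left_cancel₀ hgc0 hPconst
    simpa using this
  obtain ⟨n, hn⟩ := Complex.exp_eq_one_iff.mp hexp1
  have hA2π : A (2*Real.pi) = 2 * Real.pi * I * h 0 := key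
  refine ⟨-n, ?_⟩
  have h2πI : (2 * Real.pi * I : ℂ) ≠ 0 := by
    simp [Real.pi_ne_zero, I_ne_zero]
  have hfin : (2 * Real.pi * I : ℂ) * (((-n : ℤ) : ℂ)) = (2 * Real.pi * I : ℂ) * h 0 := by
    push_cast
    linear_combination hn + hA2π
  exact mul_left_cancel₀ h2πI hfin

/-- Sharp form of Lemma 1 for nowhere vanishing `g`: under the same hypotheses,
`g(z) = z^m · u(z)` on the punctured unit disk for some integer `m` and some
holomorphic nowhere vanishing `u` on the unit disk. -/
theorem exists_zpow_mul_unit_of_z_logDeriv_extends_holomorphic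
    (g h : ℂ → ℂ)
    (hg : ∀ z : ℂ, 0 < ‖z‖ → ‖z‖ < 1 → DifferentiableAt ℂ g z)
    (hg0 : ∀ z : ℂ, 0 < ‖z‖ → ‖z‖ < 1 → g z ≠ 0)
    (hh : ∀ z : ℂ, ‖z‖ < 1 → DifferentiableAt ℂ h z)
    (heq : ∀ z : ℂ, 0 < ‖z‖ → ‖z‖ < 1 → h z = z * deriv g z / g z) :
    ∃ (m : ℤ) (u : ℂ → ℂ),
      (∀ z : ℂ, ‖z‖ < 1 → DifferentiableAt ℂ u z) ∧
      (∀ z : ℂ, ‖z‖ < 1 → u z ≠ 0) ∧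
      (∀ z : ℂ, 0 < ‖z‖ → ‖z‖ < 1 → g z = z ^ m * u z) := by
  obtain ⟨m, hm⟩ := aux_exists_int g h hg hg0 hh heq
  set φ : ℂ → ℂ := dslope h 0 with hφ_def
  have hφ : DifferentiableOn ℂ φ (ball (0:ℂ) 1) := by
    rw [hφ_def]
    refine (differentiableOn_dslope (isOpen_ball.mem_nhds ?_)).mpr ?_
    · simp
    · exact fun z hz => (hh z (mem_ball_zero_iff.mp hz)).differentiableWithinAt
  set v : ℂ → ℂ := fun z => z ^ (-m) * g z with hv_def
  have hvne : ∀ z : ℂ, 0 < ‖z‖ → ‖z‖ < 1 → v z ≠ 0 := by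
    intro z h0 h1
    have hzne : z ≠ 0 := norm_pos_iff.mp h0
    exact mul_ne_zero (zpow_ne_zero _ hzne) (hg0 z h0 h1)
  have hv : ∀ z : ℂ, 0 < ‖z‖ → ‖z‖ < 1 → HasDerivAt v (φ z * v z) z := by
    intro z h0 h1
    have hzne : z ≠ 0 := norm_pos_iff.mp h0
    have hgz := hg0 z h0 h1
    have h1' : HasDerivAt (fun w : ℂ => w ^ (-m)) (((-m : ℤ) : ℂ) * z ^ (-m - 1)) z :=
      hasDerivAt_zpow (-m) z (Or.inl hzne)
    have h2 := h1'.mul (hg z h0 h1).hasDerivAt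
    have h2' : HasDerivAt v (((-m : ℤ) : ℂ) * z ^ (-m - 1) * g z + z ^ (-m) * deriv g z) z := by
      rw [hv_def]; exact h2
    convert h2' using 1
    have hφz : φ z = (h z - h 0) / z := by
      rw [hφ_def, dslope_of_ne _ hzne, slope_def_field, sub_zero]
    rw [hφz, heq z h0 h1, ← hm, hv_def]
    simp only
    have hzm : z ^ (-m - 1) = z ^ (-m) * z⁻¹ := by
      rw [sub_eq_add_neg, zpow_add₀ hzne, zpow_neg_one]
    rw [hzm]
    push_cast
    generalize z ^ (-m) = a
    field_simp
    ring
  -- extrema on the sphere of radius 1/2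
  have hsne : (sphere (0:ℂ) (1/2)).Nonempty := NormedSpace.sphere_nonempty.mpr (by norm_num)
  have hsmem : ∀ z ∈ sphere (0:ℂ) (1/2), 0 < ‖z‖ ∧ ‖z‖ < 1 := by
    intro z hz
    rw [mem_sphere_zero_iff_norm] at hz
    constructor <;> rw [hz] <;> norm_num
  have hvcont : ContinuousOn (fun z => ‖v z‖) (sphere (0:ℂ) (1/2)) := fun z hz =>
    (((hv z (hsmem z hz).1 (hsmem z hz).2).differentiableAt.continuousAt).norm).continuousWithinAt
  obtain ⟨zM, hzM, hM'⟩ := (isCompact_sphere (0:ℂ) (1/2)).exists_isMaxOn hsne hvcont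
  obtain ⟨zm0, hzm0, hm0'⟩ := (isCompact_sphere (0:ℂ) (1/2)).exists_isMinOn hsne hvcont
  have hM : ∀ y ∈ sphere (0:ℂ) (1/2), ‖v y‖ ≤ ‖v zM‖ := fun y hy => hM' hy
  have hm0 : ∀ y ∈ sphere (0:ℂ) (1/2), ‖v zm0‖ ≤ ‖v y‖ := fun y hy => hm0' hy
  set M := ‖v zM‖ with hM_def
  set ε := ‖v zm0‖ with hε_def
  have hε : 0 < ε :=
    norm_pos_iff.mpr (hvne zm0 (hsmem zm0 hzm0).1 (hsmem zm0 hzm0).2)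
  -- bound on φ on the closed ball of radius 1/2
  obtain ⟨C, hC⟩ := (isCompact_closedBall (0:ℂ) (1/2)).exists_bound_of_continuousOn
      (hφ.continuousOn.mono (closedBall_subset_ball (by norm_num)))
  have hC0 : 0 ≤ C := le_trans (norm_nonneg (φ 0)) (hC 0 (by
    rw [mem_closedBall_zero_iff]; norm_num))
  -- key decomposition along radii
  have key : ∀ z : ℂ, 0 < ‖z‖ → ‖z‖ < 1/2 →
      ∃ y ∈ sphere (0:ℂ) (1/2), ∃ w : ℂ, ‖w‖ ≤ C ∧ v z = v y * Complex.exp w := by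
    intro z h0 h12
    have hzne : z ≠ 0 := norm_pos_iff.mp h0
    set e : ℂ := ((‖z‖ : ℝ) : ℂ)⁻¹ * z with he_def
    have hnz : ((‖z‖ : ℝ) : ℂ) ≠ 0 := by
      simp only [ne_eq, ofReal_eq_zero]
      exact ne_of_gt h0
    have he : ‖e‖ = 1 := by
      rw [he_def, norm_mul, norm_inv, Complex.norm_real, norm_norm]
      exact inv_mul_cancel₀ (ne_of_gt h0)
    have hse : ∀ s : ℝ, ‖(s : ℂ) * e‖ = |s| := by
      intro s
      rw [norm_mul, he, mul_one, Complex.norm_real, Real.norm_eq_abs]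
    set t0 : ℝ := ‖z‖ with ht0_def
    have ht0 : 0 < t0 := h0
    have ht12 : t0 < 1/2 := h12
    set ψ : ℝ → ℂ := fun s => φ ((s : ℂ) * e) * e with hψ_def
    have hψc : ContinuousOn ψ (Ioo (-1 : ℝ) 1) := by
      intro s hs
      have hmem' : (s : ℂ) * e ∈ ball (0:ℂ) 1 := by
        rw [mem_ball_zero_iff, hse]
        exact abs_lt.mpr ⟨hs.1, hs.2⟩
      have hinner : ContinuousAt (fun s : ℝ => (s : ℂ) * e) s :=
        (Complex.continuous_ofReal.mul continuous_const).continuousAt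
      have houter : ContinuousAt φ ((s : ℂ) * e) :=
        (hφ.differentiableAt (isOpen_ball.mem_nhds hmem')).continuousAt
      have hcomp : ContinuousAt (φ ∘ fun s : ℝ => (s : ℂ) * e) s :=
        ContinuousAt.comp houter hinner
      have hca : ContinuousAt ψ s := by
        rw [hψ_def]
        exact ContinuousAt.mul hcomp continuousAt_const
      exact hca.continuousWithinAt
    have hsub : ∀ t ∈ Icc t0 (1/2 : ℝ), uIcc (0:ℝ) t ⊆ Ioo (-1 : ℝ) 1 := by
      intro t ht x hx
      rw [uIcc_of_le (le_trans (le_of_lt ht0) ht.1)] at hx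
      constructor
      · linarith [hx.1]
      · have := le_trans hx.2 ht.2; linarith
    have hψint : ∀ t ∈ Icc t0 (1/2 : ℝ), IntervalIntegrable ψ MeasureTheory.volume 0 t :=
      fun t ht => (hψc.mono (hsub t ht)).intervalIntegrable
    set B : ℝ → ℂ := fun t => ∫ s in (0:ℝ)..t, ψ s with hB_def
    have hB : ∀ t ∈ Icc t0 (1/2 : ℝ), HasDerivAt B (ψ t) t := by
      intro t ht
      have htmem : t ∈ Ioo (-1 : ℝ) 1 := ⟨by linarith [ht.1], by linarith [ht.2]⟩
      exact intervalIntegral.integral_hasDerivAt_right (hψint t ht)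
        (hψc.stronglyMeasurableAtFilter isOpen_Ioo t htmem)
        (hψc.continuousAt (isOpen_Ioo.mem_nhds htmem))
    set F : ℝ → ℂ := fun t => v ((t : ℂ) * e) * Complex.exp (-B t) with hF_def
    have hF : ∀ t ∈ Icc t0 (1/2 : ℝ), HasDerivAt F 0 t := by
      intro t ht
      have htpos : 0 < t := lt_of_lt_of_le ht0 ht.1
      have hte0 : 0 < ‖(t : ℂ) * e‖ := by rw [hse, abs_of_pos htpos]; exact htpos
      have hte1 : ‖(t : ℂ) * e‖ < 1 := by rw [hse, abs_of_pos htpos]; linarith [ht.2]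
      have hvin := hv ((t : ℂ) * e) hte0 hte1
      have hcomp : HasDerivAt (fun w : ℂ => v (w * e))
          (φ ((t : ℂ) * e) * v ((t : ℂ) * e) * e) ((t : ℝ) : ℂ) :=
        by have := hvin.comp ((t : ℝ) : ℂ) (hasDerivAt_mul_const (x := ((t : ℝ) : ℂ)) e); exact this
      have hreal : HasDerivAt (fun s : ℝ => v ((s : ℂ) * e))
          (φ ((t : ℂ) * e) * v ((t : ℂ) * e) * e) t := hcomp.comp_ofReal
      have h1 := hreal.mul (((hB t ht).neg).cexp)
      have h1' : HasDerivAt F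
          (φ ((t : ℂ) * e) * v ((t : ℂ) * e) * e * Complex.exp (-B t)
            + v ((t : ℂ) * e) * (Complex.exp (-B t) * -ψ t)) t := by
        rw [hF_def]; exact h1
      convert h1' using 1
      rw [hψ_def]
      simp only
      ring
    have hFconst := constant_of_derivWithin_zero (f := F) (a := t0) (b := 1/2)
        (fun x hx => ((hF x hx).differentiableAt).differentiableWithinAt)
        (fun x hx => (((hF x (Ico_subset_Icc_self hx)).hasDerivWithinAt).derivWithin
          (uniqueDiffOn_Icc ht12 x (Ico_subset_Icc_self hx))))
    have hkey := hFconst (1/2) ⟨le_of_lt ht12, le_refl _⟩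
    -- hkey : F (1/2) = F t0
    have hz_eq : ((t0 : ℝ) : ℂ) * e = z := by
      rw [he_def, ht0_def, ← mul_assoc, mul_inv_cancel₀ hnz, one_mul]
    set y : ℂ := (((1:ℝ)/2 : ℝ) : ℂ) * e with hy_def
    have hy : y ∈ sphere (0:ℂ) (1/2) := by
      rw [mem_sphere_zero_iff_norm, hy_def, hse]
      norm_num
    have hFt0 : F t0 = v z * Complex.exp (-B t0) := by
      rw [hF_def]; simp only; rw [hz_eq]
    have hF12 : F (1/2) = v y * Complex.exp (-B (1/2)) := by
      rw [hF_def, hy_def]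
    have hvz : v z = v y * Complex.exp (B t0 - B (1/2)) := by
      have h2 : v y * Complex.exp (-B (1/2)) = v z * Complex.exp (-B t0) := by
        rw [← hF12, ← hFt0]; exact hkey
      calc v z = v z * Complex.exp (-B t0) * Complex.exp (B t0) := by
            rw [mul_assoc, ← Complex.exp_add]; simp
        _ = v y * Complex.exp (-B (1/2)) * Complex.exp (B t0) := by rw [h2]
        _ = v y * Complex.exp (B t0 - B (1/2)) := by
            rw [mul_assoc, ← Complex.exp_add]
            congr 1
            ring
    have hwbound : ‖B t0 - B (1/2)‖ ≤ C := by
      have hint1 : IntervalIntegrable ψ MeasureTheory.volume 0 t0 :=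
        hψint t0 ⟨le_refl _, le_of_lt ht12⟩
      have hint2 : IntervalIntegrable ψ MeasureTheory.volume t0 (1/2) := by
        refine (hψc.mono ?_).intervalIntegrable
        intro x hx
        rw [uIcc_of_le (le_of_lt ht12)] at hx
        exact ⟨by linarith [hx.1], by linarith [hx.2]⟩
      have hadd := intervalIntegral.integral_add_adjacent_intervals hint1 hint2
      have hsplit : B t0 - B (1/2) = -∫ s in t0..(1/2 : ℝ), ψ s := by
        rw [hB_def]
        simp only
        rw [← hadd]
        ring
      rw [hsplit, norm_neg]
      have hbd : ∀ x ∈ Set.uIoc t0 (1/2 : ℝ), ‖ψ x‖ ≤ C := by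
        intro x hx
        rw [Set.uIoc_of_le (le_of_lt ht12)] at hx
        have hxpos : 0 < x := lt_trans ht0 hx.1
        rw [hψ_def]
        simp only
        rw [norm_mul, he, mul_one]
        apply hC
        rw [mem_closedBall_zero_iff, hse, abs_of_pos hxpos]
        exact hx.2
      calc ‖∫ s in t0..(1/2 : ℝ), ψ s‖ ≤ C * |(1/2 : ℝ) - t0| :=
            intervalIntegral.norm_integral_le_of_norm_le_const hbd
        _ ≤ C * 1 := by
            apply mul_le_mul_of_nonneg_left _ hC0
            rw [abs_of_pos (by linarith)]
            linarith
        _ = C := mul_one C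
    exact ⟨y, hy, B t0 - B (1/2), hwbound, hvz⟩
  -- upper and lower bounds near 0
  have hub : ∀ z : ℂ, 0 < ‖z‖ → ‖z‖ < 1/2 → ‖v z‖ ≤ M * Real.exp C := by
    intro z h0 h12
    obtain ⟨y, hy, w, hwC, hvw⟩ := key z h0 h12
    rw [hvw, norm_mul, Complex.norm_exp]
    apply mul_le_mul (hM y hy)
    · exact Real.exp_le_exp.mpr (le_trans (Complex.re_le_norm w) hwC)
    · exact le_of_lt (Real.exp_pos _)
    · rw [hM_def]; exact norm_nonneg _
  have hlb : ∀ z : ℂ, 0 < ‖z‖ → ‖z‖ < 1/2 → ε * Real.exp (-C) ≤ ‖v z‖ := by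
    intro z h0 h12
    obtain ⟨y, hy, w, hwC, hvw⟩ := key z h0 h12
    rw [hvw, norm_mul, Complex.norm_exp]
    apply mul_le_mul (hm0 y hy)
    · apply Real.exp_le_exp.mpr
      have h1' : -‖w‖ ≤ w.re :=
        le_trans (neg_le_neg (Complex.abs_re_le_norm w)) (neg_abs_le _)
      have h2' : -C ≤ -‖w‖ := neg_le_neg hwC
      linarith
    · exact le_of_lt (Real.exp_pos _)
    · exact norm_nonneg _
  -- removable singularity
  have hball : ball (0:ℂ) (1/2) ∈ 𝓝 (0:ℂ) := isOpen_ball.mem_nhds (mem_ball_self (by norm_num))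
  have hdv : DifferentiableOn ℂ v (ball (0:ℂ) (1/2) \ {0}) := by
    intro z hz
    have hzne : z ≠ 0 := by simpa using hz.2
    have h0 : 0 < ‖z‖ := norm_pos_iff.mpr hzne
    exact ((hv z h0 (lt_trans (mem_ball_zero_iff.mp hz.1) (by norm_num))).differentiableAt).differentiableWithinAt
  have hbdd : BddAbove (norm ∘ v '' (ball (0:ℂ) (1/2) \ {0})) := by
    refine ⟨M * Real.exp C, ?_⟩
    rintro x ⟨x', ⟨hx1, hx2⟩, rfl⟩
    have hxne : x' ≠ 0 := by simpa using hx2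
    exact hub x' (norm_pos_iff.mpr hxne) (mem_ball_zero_iff.mp hx1)
  have Hu := Complex.differentiableOn_update_limUnder_of_bddAbove hball hdv hbdd
  set u : ℂ → ℂ := Function.update v 0 (limUnder (𝓝[≠] (0:ℂ)) v) with hu_def
  have hu_eq : ∀ z : ℂ, z ≠ 0 → u z = v z := by
    intro z hz
    rw [hu_def]
    exact Function.update_of_ne hz _ _
  have hudiff : ∀ z : ℂ, ‖z‖ < 1 → DifferentiableAt ℂ u z := by
    intro z hz1
    by_cases hz0 : z = 0
    · subst hz0
      exact Hu.differentiableAt hball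
    · have h0 : 0 < ‖z‖ := norm_pos_iff.mpr hz0
      have heq' : u =ᶠ[𝓝 z] v := by
        filter_upwards [eventually_ne_nhds hz0] with w hw
        exact hu_eq w hw
      exact (heq'.differentiableAt_iff).mpr ((hv z h0 hz1).differentiableAt)
  refine ⟨m, u, hudiff, ?_, ?_⟩
  · intro z hz1
    by_cases hz0 : z = 0
    · subst hz0
      have hu0 : DifferentiableAt ℂ u 0 := Hu.differentiableAt hball
      have hvu : Filter.Tendsto v (𝓝[≠] (0:ℂ)) (𝓝 (u 0)) := by
        have h1 : Filter.Tendsto u (𝓝[≠] (0:ℂ)) (𝓝 (u 0)) :=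
          (hu0.continuousAt.tendsto).mono_left nhdsWithin_le_nhds
        refine Filter.Tendsto.congr' ?_ h1
        filter_upwards [self_mem_nhdsWithin] with w hw
        exact hu_eq w hw
      have hev : ∀ᶠ w in 𝓝[≠] (0:ℂ), ε * Real.exp (-C) ≤ ‖v w‖ := by
        have h12 : ∀ᶠ w in 𝓝 (0:ℂ), ‖w‖ < 1/2 := by
          filter_upwards [hball] with w hw
          exact mem_ball_zero_iff.mp hw
        filter_upwards [h12.filter_mono nhdsWithin_le_nhds, self_mem_nhdsWithin] with w hw1 hw2
        exact hlb w (norm_pos_iff.mpr hw2) hw1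
      have hlow : ε * Real.exp (-C) ≤ ‖u 0‖ := ge_of_tendsto hvu.norm hev
      have : 0 < ‖u 0‖ := lt_of_lt_of_le (by positivity) hlow
      exact norm_pos_iff.mp this
    · rw [hu_eq z hz0]
      exact hvne z (norm_pos_iff.mpr hz0) hz1
  · intro z h0 h1
    have hzne : z ≠ 0 := norm_pos_iff.mp h0
    rw [hu_eq z hzne, hv_def]
    simp only
    rw [← mul_assoc, ← zpow_add₀ hzne]
    simp
end
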